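/- If π is a Dumont permutation of the fourth kind of length 2n avoiding 1324 whose last entry is not 2n, then the last entry is even, say 2k with 1 ≤ k ≤ n-1, the values 1,...,2k-1 are all fixed points of π, all entries other than 2n and 2k occur in increasing order, and 2n occupies some position l with 2k ≤ l ≤ 2n-1. -/

import Mathlib

/-- `π` contains the pattern `q` (a length-`k` sequence of distinct values given
as a function `Fin k → Fin k`) if some subsequence of `π` is order-isomorphic to `q`. -/
def PatternContains {n k : ℕ} (π : Equiv.Perm (Fin n)) (q : Fin k → Fin k) : Prop :=
  ∃ f : Fin k → Fin n, StrictMono f ∧ ∀ a b : Fin k, q a < q b ↔ π (f a) < π (f b)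

/-- `π` avoids the pattern `q`. -/
def Avoids {n k : ℕ} (π : Equiv.Perm (Fin n)) (q : Fin k → Fin k) : Prop :=
  ¬ PatternContains π q

/-- A Dumont permutation of the fourth kind of size `2n` (0-based indexing:
position `i` and value `π i` correspond to 1-based position `i+1` and value `π i + 1`):
every deficiency occurs at an even (1-based) position and has an even (1-based) value. -/
def IsDumont4 (n : ℕ) (π : Equiv.Perm (Fin (2 * n))) : Prop :=
  ∀ i : Fin (2 * n), (π i : ℕ) < (i : ℕ) → Even ((i : ℕ) + 1) ∧ Even ((π i : ℕ) + 1)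

def p1234 : Fin 4 → Fin 4 := ![0, 1, 2, 3]
def p1342 : Fin 4 → Fin 4 := ![0, 2, 3, 1]
def p1432 : Fin 4 → Fin 4 := ![0, 3, 2, 1]
def p1324 : Fin 4 → Fin 4 := ![0, 2, 1, 3]
def p1243 : Fin 4 → Fin 4 := ![0, 1, 3, 2]
def p1423 : Fin 4 → Fin 4 := ![0, 3, 1, 2]
def p231 : Fin 3 → Fin 3 := ![1, 2, 0]
def p321 : Fin 3 → Fin 3 := ![2, 1, 0]
def p213 : Fin 3 → Fin 3 := ![1, 0, 2]
def p312 : Fin 3 → Fin 3 := ![2, 0, 1]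

lemma fv {n a : ℕ} (h : a < n) : ((⟨a, h⟩ : Fin n) : ℕ) = a := rfl

lemma contains1324 {N : ℕ} (π : Equiv.Perm (Fin N)) (x0 x1 x2 x3 : Fin N)
    (h01 : x0 < x1) (h12 : x1 < x2) (h23 : x2 < x3)
    (v02 : π x0 < π x2) (v21 : π x2 < π x1) (v13 : π x1 < π x3) :
    PatternContains π p1324 := by
  have h02 : x0 < x2 := lt_trans h01 h12
  have h03 : x0 < x3 := lt_trans h02 h23
  have h13 : x1 < x3 := lt_trans h12 h23
  have w01 : π x0 < π x1 := lt_trans v02 v21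
  have w03 : π x0 < π x3 := lt_trans w01 v13
  have w23 : π x2 < π x3 := lt_trans v21 v13
  refine ⟨fun a => match a with | 0 => x0 | 1 => x1 | 2 => x2 | 3 => x3, ?_, ?_⟩
  · have hdec : ∀ a : Fin 4, a = 0 ∨ a = 1 ∨ a = 2 ∨ a = 3 := by decide
    intro a b hab
    rcases hdec a with rfl|rfl|rfl|rfl <;> rcases hdec b with rfl|rfl|rfl|rfl <;>
      first
        | exact absurd hab (by decide)
        | exact h01 | exact h02 | exact h03 | exact h12 | exact h13 | exact h23
  · have hdec : ∀ a : Fin 4, a = 0 ∨ a = 1 ∨ a = 2 ∨ a = 3 := by decide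
    intro a b
    rcases hdec a with rfl|rfl|rfl|rfl <;> rcases hdec b with rfl|rfl|rfl|rfl <;>
      first
        | exact iff_of_true (by decide) (by assumption)
        | exact iff_of_false (by decide) (by first
            | exact lt_irrefl _
            | exact not_lt_of_gt (by assumption))


/-- Structure of a 1324-avoiding Dumont-4 permutation whose last entry is not 2n:
the last entry is an even value 2k (1 ≤ k ≤ n-1), the values 1,…,2k-1 are fixed points,
all entries other than 2n and 2k occur in increasing order, and 2n occupies some
(1-based) position l with 2k ≤ l ≤ 2n-1.  (0-based: value v corresponds to v-1.) -/
theorem stmt_11 (n : ℕ) (hn : 1 ≤ n) (π : Equiv.Perm (Fin (2 * n)))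
    (hπ : IsDumont4 n π) (hav : Avoids π p1324)
    (hlast : (π ⟨2 * n - 1, by omega⟩ : ℕ) ≠ 2 * n - 1) :
    ∃ (k : ℕ) (hk1 : 1 ≤ k) (hk2 : k ≤ n - 1),
      (π ⟨2 * n - 1, by omega⟩ : ℕ) = 2 * k - 1 ∧
      (∀ (j : ℕ) (hj : j < 2 * k - 1), π ⟨j, by omega⟩ = ⟨j, by omega⟩) ∧
      (∀ i j : Fin (2 * n), i < j →
        (π i : ℕ) ≠ 2 * n - 1 → (π j : ℕ) ≠ 2 * n - 1 →
        (π i : ℕ) ≠ 2 * k - 1 → (π j : ℕ) ≠ 2 * k - 1 → π i < π j) ∧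
      (∃ (l : ℕ) (hl1 : 2 * k ≤ l) (hl2 : l ≤ 2 * n - 1),
        (π ⟨l - 1, by omega⟩ : ℕ) = 2 * n - 1) := by
  classical
  have hN : 2 ≤ 2 * n := by omega
  have h2n1 : 2 * n - 1 < 2 * n := by omega
  set la : Fin (2 * n) := ⟨2 * n - 1, h2n1⟩ with hladef
  have hlast' : (π la : ℕ) ≠ 2 * n - 1 := hlast
  have hlaval : (la : ℕ) = 2 * n - 1 := rfl
  have hbval : (π la : ℕ) < 2 * n := (π la).isLt
  have hblt : (π la : ℕ) < 2 * n - 1 := by omega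
  obtain ⟨-, hbodd⟩ := hπ la (by rw [hlaval]; omega)
  obtain ⟨k, hk⟩ := hbodd
  have hk1 : 1 ≤ k := by omega
  have hk2 : k ≤ n - 1 := by omega
  have hbk : (π la : ℕ) = 2 * k - 1 := by omega
  have hbv1 : 1 ≤ (π la : ℕ) := by omega
  -- Claim B: positions < (π la : ℕ) are fixed points
  have hfixAux : ∀ v : ℕ, ∀ x : Fin (2 * n), (x : ℕ) = v → v < (π la : ℕ) → π x = x := by
    intro v
    induction v using Nat.strong_induction_on with
    | _ v IH =>
      intro x hx hvb
      by_contra hne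
      have hvN : v < 2 * n := by omega
      have hxv : x = ⟨v, hvN⟩ := Fin.ext hx
      subst hxv
      set p : Fin (2 * n) := π.symm ⟨v, hvN⟩ with hpdef
      have hp : π p = ⟨v, hvN⟩ := π.apply_symm_apply _
      have hpval : (π p : ℕ) = v := by rw [hp]
      have hpge : v ≤ (p : ℕ) := by
        by_contra hcon
        push_neg at hcon
        have h2 := IH (p : ℕ) (by omega) p rfl (by omega)
        rw [h2] at hpval
        omega
      have hpgt : v < (p : ℕ) := by
        rcases eq_or_lt_of_le hpge with hcon | hcon
        · exfalso
          have hpx : p = ⟨v, hvN⟩ := Fin.ext hcon.symm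
          rw [hpx] at hp
          exact hne hp
        · exact hcon
      obtain ⟨⟨a1, ha1⟩, ⟨a2, ha2⟩⟩ := hπ p (by omega)
      rw [hpval] at ha2
      have hv1 : 1 ≤ v := by omega
      have hv2b : v + 2 ≤ (π la : ℕ) := by omega
      have hv1N : v + 1 < 2 * n := by omega
      set r : Fin (2 * n) := π.symm ⟨v + 1, hv1N⟩ with hrdef
      have hr : π r = ⟨v + 1, hv1N⟩ := π.apply_symm_apply _
      have hrval : (π r : ℕ) = v + 1 := by rw [hr]
      have hrge : v ≤ (r : ℕ) := by
        by_contra hcon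
        push_neg at hcon
        have h2 := IH (r : ℕ) (by omega) r rfl (by omega)
        rw [h2] at hrval
        omega
      have hrle : (r : ℕ) ≤ v + 1 := by
        by_contra hcon
        push_neg at hcon
        obtain ⟨-, ⟨a3, ha3⟩⟩ := hπ r (by omega)
        rw [hrval] at ha3
        omega
      have hrp : (r : ℕ) ≠ (p : ℕ) := by
        intro hcon
        have h2 : r = p := Fin.ext hcon
        rw [h2, hpval] at hrval
        omega
      have hrltp : (r : ℕ) < (p : ℕ) := by omega
      have hpla : (p : ℕ) < 2 * n - 1 := by
        have h3 : (p : ℕ) ≠ 2 * n - 1 := by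
          intro hcon
          have h2 : p = la := Fin.ext (by rw [hcon, hlaval])
          rw [h2] at hpval
          omega
        have := p.isLt
        omega
      have hvm1N : v - 1 < 2 * n := by omega
      have hx0 : π ⟨v - 1, hvm1N⟩ = ⟨v - 1, hvm1N⟩ := IH (v - 1) (by omega) _ rfl (by omega)
      exact hav (contains1324 π ⟨v - 1, hvm1N⟩ r p la
        (by simp only [Fin.lt_def, fv]; omega)
        (by simp only [Fin.lt_def]; omega)
        (by simp only [Fin.lt_def, hlaval]; omega)
        (by rw [hx0]; simp only [Fin.lt_def, fv, hpval]; omega)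
        (by simp only [Fin.lt_def, hpval, hrval]; omega)
        (by simp only [Fin.lt_def, hrval, hlaval]; omega))
  have hfixpos : ∀ x : Fin (2 * n), (x : ℕ) < (π la : ℕ) → π x = x :=
    fun x h => hfixAux (x : ℕ) x rfl h
  have hfixval : ∀ x : Fin (2 * n), (π x : ℕ) < (π la : ℕ) → π x = x := by
    intro x h
    have h2 : π (π x) = π x := hfixpos (π x) h
    exact π.injective h2
  -- position of the maximum value 2n-1
  set L : Fin (2 * n) := π.symm ⟨2 * n - 1, h2n1⟩ with hLdef
  have hL : π L = ⟨2 * n - 1, h2n1⟩ := π.apply_symm_apply _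
  have hLval : (π L : ℕ) = 2 * n - 1 := by rw [hL]
  have hLge : (π la : ℕ) ≤ (L : ℕ) := by
    by_contra hcon
    push_neg at hcon
    have h2 := hfixpos L hcon
    rw [h2] at hLval
    omega
  have hLlt : (L : ℕ) < 2 * n - 1 := by
    have h3 : (L : ℕ) ≠ 2 * n - 1 := by
      intro hcon
      have h2 : L = la := Fin.ext (by rw [hcon, hlaval])
      rw [h2] at hLval
      omega
    have := L.isLt
    omega
  -- main monotonicity claim, by downward induction on position j
  have main : ∀ t : ℕ, ∀ j : Fin (2 * n), 2 * n - 2 - (j : ℕ) = t →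
      ∀ i : Fin (2 * n), i < j → (π i : ℕ) ≠ 2 * n - 1 → (π j : ℕ) ≠ 2 * n - 1 →
      (π i : ℕ) ≠ (π la : ℕ) → (π j : ℕ) ≠ (π la : ℕ) → π i < π j := by
    intro t
    induction t using Nat.strong_induction_on with
    | _ t IH =>
    intro j htj i hij hi1 hj1 hib hjb
    rw [Fin.lt_def] at hij
    by_contra hnlt
    have hji : (π j : ℕ) < (π i : ℕ) := by
      rw [Fin.lt_def, not_lt] at hnlt
      have hne : (π i : ℕ) ≠ (π j : ℕ) := by
        intro hcon
        have h2 := π.injective (Fin.ext hcon)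
        rw [h2] at hij
        omega
      omega
    rcases lt_trichotomy ((π j : ℕ)) ((π la : ℕ)) with hcase | hcase | hcase
    · -- small values are fixed, no inversion possible
      have hj2 := hfixval j hcase
      have e2 : (π j : ℕ) = (j : ℕ) := by rw [hj2]
      have hilt : (i : ℕ) < (π la : ℕ) := by omega
      have hi2 := hfixpos i hilt
      have e1 : (π i : ℕ) = (i : ℕ) := by rw [hi2]
      omega
    · exact hjb hcase
    · -- both values above (π la : ℕ)
      have hi3 : (π la : ℕ) < (π i : ℕ) := by omega
      have hige : (π la : ℕ) ≤ (i : ℕ) := by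
        by_contra hcon
        push_neg at hcon
        have h2 := hfixpos i hcon
        have e1 : (π i : ℕ) = (i : ℕ) := by rw [h2]
        omega
      have hjle : (j : ℕ) ≤ 2 * n - 2 := by
        have h3 : (j : ℕ) ≠ 2 * n - 1 := by
          intro hcon
          have h2 : j = la := Fin.ext (by rw [hcon, hlaval])
          exact hjb (by rw [h2])
        have := j.isLt
        omega
      have hile2 : (π i : ℕ) ≤ 2 * n - 2 := by
        have := (π i).isLt
        omega
      have hjle2 : (π j : ℕ) ≤ 2 * n - 2 := by
        have := (π j).isLt
        omega
      have hiL : (i : ℕ) ≠ (L : ℕ) := by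
        intro hcon
        exact hi1 (by rw [show i = L from Fin.ext hcon]; exact hLval)
      have hjL : (j : ℕ) ≠ (L : ℕ) := by
        intro hcon
        exact hj1 (by rw [show j = L from Fin.ext hcon]; exact hLval)
      have hbm1N : (π la : ℕ) - 1 < 2 * n := by omega
      have hx0 : π ⟨(π la : ℕ) - 1, hbm1N⟩ = ⟨(π la : ℕ) - 1, hbm1N⟩ :=
        hfixpos _ (by simp only [fv]; omega)
      rcases lt_or_gt_of_ne hjL with hLj | hLj
      · -- j < L : pattern (bv-1, i, j, L)
        exact hav (contains1324 π ⟨(π la : ℕ) - 1, hbm1N⟩ i j L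
          (by simp only [Fin.lt_def, fv]; omega)
          (by simp only [Fin.lt_def]; omega)
          (by simp only [Fin.lt_def]; omega)
          (by rw [hx0]; simp only [Fin.lt_def, fv]; omega)
          (by simp only [Fin.lt_def]; omega)
          (by simp only [Fin.lt_def, hLval]; omega))
      · -- L < j
        have hLj' : (L : ℕ) < (j : ℕ) := hLj
        have T1 : ∀ q : Fin (2 * n), (j : ℕ) < (q : ℕ) → (q : ℕ) ≤ 2 * n - 2 →
            (π i : ℕ) < (π q : ℕ) ∧ (π j : ℕ) < (π q : ℕ) := by
          intro q hq1 hq2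
          have hqb : (π q : ℕ) ≠ (π la : ℕ) := by
            intro hcon
            have h2 : q = la := π.injective (Fin.ext hcon)
            have h3 := congrArg Fin.val h2
            rw [hlaval] at h3
            omega
          have hq1' : (π q : ℕ) ≠ 2 * n - 1 := by
            intro hcon
            have h2 : q = L := π.injective (Fin.ext (by rw [hcon, hLval]))
            have h3 := congrArg Fin.val h2
            omega
          have r1 := IH (2 * n - 2 - (q : ℕ)) (by omega) q rfl i
            (by rw [Fin.lt_def]; omega) hi1 hq1' hib hqb
          have r2 := IH (2 * n - 2 - (q : ℕ)) (by omega) q rfl j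
            (by rw [Fin.lt_def]; omega) hj1 hq1' hjb hqb
          exact ⟨Fin.lt_def.mp r1, Fin.lt_def.mp r2⟩
        -- counting: π j is a deficiency
        have hdefj : (π j : ℕ) < (j : ℕ) := by
          have hSle : (Finset.Ioo ((π la : ℕ)) ((π j : ℕ))).card ≤
              (((Finset.Ico ((π la : ℕ)) ((j : ℕ))).erase ((i : ℕ))).erase ((L : ℕ))).card := by
            apply Finset.card_le_card_of_injOn
              (fun w => ((π.symm ⟨w % (2 * n), Nat.mod_lt w (by omega)⟩ : Fin (2 * n)) : ℕ))
            · intro w hw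
              rw [Finset.mem_coe, Finset.mem_Ioo] at hw
              have hwN : w < 2 * n := by omega
              have hmk : (⟨w % (2 * n), Nat.mod_lt w (by omega)⟩ : Fin (2 * n)) = ⟨w, hwN⟩ :=
                Fin.ext (by simp [Nat.mod_eq_of_lt hwN])
              simp only [hmk]
              set rw0 : Fin (2 * n) := π.symm ⟨w, hwN⟩ with hrw0def
              have hrw : π rw0 = ⟨w, hwN⟩ := π.apply_symm_apply _
              have hrwval : (π rw0 : ℕ) = w := by rw [hrw]
              have hbvle : (π la : ℕ) ≤ (rw0 : ℕ) := by
                by_contra hcon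
                push_neg at hcon
                have h2 := hfixpos rw0 hcon
                rw [h2] at hrwval
                omega
              have hrwne : (rw0 : ℕ) ≠ 2 * n - 1 := by
                intro hcon
                have h2 : rw0 = la := Fin.ext (by rw [hcon, hlaval])
                rw [h2] at hrwval
                omega
              have hrwle : (rw0 : ℕ) ≤ 2 * n - 2 := by
                have := rw0.isLt
                omega
              have hrwj : (rw0 : ℕ) ≠ (j : ℕ) := by
                intro hcon
                have h2 : rw0 = j := Fin.ext hcon
                rw [h2] at hrwval
                omega
              have hrwltj : (rw0 : ℕ) < (j : ℕ) := by
                by_contra hcon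
                push_neg at hcon
                have hgt : (j : ℕ) < (rw0 : ℕ) := by omega
                have := (T1 rw0 hgt hrwle).2
                omega
              have hrwi : (rw0 : ℕ) ≠ (i : ℕ) := by
                intro hcon
                have h2 : rw0 = i := Fin.ext hcon
                rw [h2] at hrwval
                omega
              have hrwL : (rw0 : ℕ) ≠ (L : ℕ) := by
                intro hcon
                have h2 : rw0 = L := Fin.ext hcon
                rw [h2, hLval] at hrwval
                omega
              rw [Finset.mem_coe, Finset.mem_erase, Finset.mem_erase, Finset.mem_Ico]
              exact ⟨hrwL, hrwi, hbvle, hrwltj⟩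
            · intro w1 h1 w2 h2 heq
              simp only [Finset.coe_Ioo, Set.mem_Ioo] at h1 h2
              have h1N : w1 < 2 * n := by omega
              have h2N : w2 < 2 * n := by omega
              have hmk1 : (⟨w1 % (2 * n), Nat.mod_lt w1 (by omega)⟩ : Fin (2 * n)) = ⟨w1, h1N⟩ :=
                Fin.ext (by simp [Nat.mod_eq_of_lt h1N])
              have hmk2 : (⟨w2 % (2 * n), Nat.mod_lt w2 (by omega)⟩ : Fin (2 * n)) = ⟨w2, h2N⟩ :=
                Fin.ext (by simp [Nat.mod_eq_of_lt h2N])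
              simp only [hmk1, hmk2] at heq
              have h3 := π.symm.injective (Fin.ext heq)
              have h4 := congrArg Fin.val h3
              simpa using h4
          rw [Nat.card_Ioo] at hSle
          have hiIn : (i : ℕ) ∈ Finset.Ico ((π la : ℕ)) ((j : ℕ)) :=
            Finset.mem_Ico.mpr ⟨hige, hij⟩
          have hLIn : (L : ℕ) ∈ (Finset.Ico ((π la : ℕ)) ((j : ℕ))).erase ((i : ℕ)) :=
            Finset.mem_erase.mpr ⟨fun h => hiL h.symm, Finset.mem_Ico.mpr ⟨hLge, hLj'⟩⟩
          rw [Finset.card_erase_of_mem hLIn, Finset.card_erase_of_mem hiIn,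
            Nat.card_Ico] at hSle
          omega
        obtain ⟨⟨c1, hc1⟩, ⟨c2, hc2⟩⟩ := hπ j hdefj
        have hj3 : (j : ℕ) ≤ 2 * n - 3 := by omega
        have hw2 : (π j : ℕ) + 1 < 2 * n := by omega
        set r0 : Fin (2 * n) := π.symm ⟨(π j : ℕ) + 1, hw2⟩ with hr0def
        have hr0 : π r0 = ⟨(π j : ℕ) + 1, hw2⟩ := π.apply_symm_apply _
        have hr0val : (π r0 : ℕ) = (π j : ℕ) + 1 := by rw [hr0]
        have hr0ge : (π la : ℕ) ≤ (r0 : ℕ) := by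
          by_contra hcon
          push_neg at hcon
          have h2 := hfixpos r0 hcon
          rw [h2] at hr0val
          omega
        have hr0le : (r0 : ℕ) ≤ (π j : ℕ) + 1 := by
          by_contra hcon
          push_neg at hcon
          obtain ⟨-, ⟨c3, hc3⟩⟩ := hπ r0 (by omega)
          rw [hr0val] at hc3
          omega
        have hr0j : (r0 : ℕ) ≠ (j : ℕ) := by
          intro hcon
          have h2 : r0 = j := Fin.ext hcon
          rw [h2] at hr0val
          omega
        have hr0ltj : (r0 : ℕ) < (j : ℕ) := by omega
        have hqN : (j : ℕ) + 1 < 2 * n := by omega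
        have hq := T1 ⟨(j : ℕ) + 1, hqN⟩ (by simp only [fv]; omega) (by simp only [fv]; omega)
        exact hav (contains1324 π ⟨(π la : ℕ) - 1, hbm1N⟩ r0 j ⟨(j : ℕ) + 1, hqN⟩
          (by simp only [Fin.lt_def, fv]; omega)
          (by simp only [Fin.lt_def]; omega)
          (by simp only [Fin.lt_def, fv]; omega)
          (by rw [hx0]; simp only [Fin.lt_def, fv]; omega)
          (by simp only [Fin.lt_def, hr0val]; omega)
          (by simp only [Fin.lt_def, hr0val]; omega))
  refine ⟨k, hk1, hk2, hbk, ?_, ?_, ?_⟩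
  · intro j hj
    exact hfixAux j ⟨j, by omega⟩ rfl (by omega)
  · intro i j h h1 h2 h3 h4
    exact main (2 * n - 2 - (j : ℕ)) j rfl i h h1 h2 (by omega) (by omega)
  · refine ⟨(L : ℕ) + 1, by omega, by omega, ?_⟩
    exact hLval
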